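/- arXiv:2106.05776 — 2 statements merged into one kernel-verified Lean document; each statement's English description precedes it below -/
import Mathlib

section
/- Let R : ℝ → Matrix n n ℂ be such that R(ω) is positive semidefinite Hermitian for each ω, and let R^{1/2}(ω) denote its positive semidefinite square root. Then for any finite set of frequencies {ω_α} and any t > 0, the block matrix with (α,β)-blocks γ^⋆(ω_α, ω_β, t)_{ij} = 2πt e^{i(ω_β−ω_α)t/2} sinc((ω_β−ω_α)t/2) Σ_k R^{1/2}_{jk}(ω_β) R^{1/2}_{ki}(ω_α) is positive semidefinite. -/
open scoped ComplexOrder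
open MeasureTheory Complex Finset

noncomputable def sinc (x : ℝ) : ℝ := if x = 0 then 1 else Real.sin x / x

lemma sinc_neg (x : ℝ) : sinc (-x) = sinc x := by
  unfold sinc
  rcases eq_or_ne x 0 with h | h
  · simp [h]
  · rw [if_neg (neg_ne_zero.mpr h), if_neg h, Real.sin_neg, neg_div_neg_eq]

lemma exp_sub_exp_neg (θ : ℂ) :
    Complex.exp (θ * Complex.I) - Complex.exp (-θ * Complex.I) =
      2 * Complex.I * Complex.sin θ := by
  rw [Complex.sin]
  have hI := Complex.I_sq
  field_simp
  linear_combination (Complex.exp (θ*Complex.I) - Complex.exp (-(θ*Complex.I))) * hI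

lemma integral_exp_I (c t : ℝ) (ht : t ≠ 0) :
    (∫ s in (0:ℝ)..t, Complex.exp (Complex.I * c * s)) =
      (t : ℂ) * Complex.exp (Complex.I * c * t / 2) * ((sinc (c * t / 2) : ℝ) : ℂ) := by
  rcases eq_or_ne c 0 with hc | hc
  · simp [hc, sinc]
  · have hIc : (Complex.I * (c : ℂ)) ≠ 0 := by
      simp [Complex.I_ne_zero, Complex.ofReal_eq_zero, hc]
    have h1 : (∫ s in (0:ℝ)..t, Complex.exp (Complex.I * c * s)) =
        (Complex.exp (Complex.I * c * t) - 1) / (Complex.I * c) := by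
      have := integral_exp_mul_complex (a := 0) (b := t) hIc
      simp only [mul_assoc] at this ⊢
      rw [this]
      norm_num
    rw [h1]
    have hθ : ((c * t / 2 : ℝ) : ℂ) ≠ 0 := by
      simp [Complex.ofReal_eq_zero, hc, ht]
    have hsinc : sinc (c * t / 2) = Real.sin (c * t / 2) / (c * t / 2) := by
      unfold sinc
      rw [if_neg (fun h => hθ (by exact_mod_cast h))]
    have hc' : (c : ℂ) ≠ 0 := Complex.ofReal_ne_zero.mpr hc
    have ht' : (t : ℂ) ≠ 0 := Complex.ofReal_ne_zero.mpr ht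
    have key : Complex.exp (Complex.I * c * t) - 1 =
        Complex.exp (Complex.I * c * t / 2) * (2 * Complex.I * Complex.sin ((c:ℂ) * t / 2)) := by
      have h2 := exp_sub_exp_neg ((c:ℂ) * t / 2)
      have e1 : Complex.I * (c:ℂ) * (t:ℂ) = (c:ℂ)*t/2*Complex.I + (c:ℂ)*t/2*Complex.I := by ring
      have e2 : Complex.I * (c:ℂ) * (t:ℂ) / 2 = (c:ℂ)*t/2*Complex.I := by ring
      rw [e2, e1, Complex.exp_add, ← h2]
      have e3 : Complex.exp ((c:ℂ)*t/2*Complex.I) * Complex.exp (-((c:ℂ)*t/2)*Complex.I) = 1 := by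
        rw [← Complex.exp_add]
        ring_nf
        exact Complex.exp_zero
      linear_combination e3
    rw [key, hsinc]
    have hcast : ((Real.sin (c*t/2) / (c*t/2) : ℝ) : ℂ) =
        Complex.sin ((c:ℂ)*t/2) / ((c:ℂ)*t/2) := by
      push_cast
      ring
    rw [hcast]
    field_simp

theorem star_regularized_block_matrix_posSemidef
    {n : Type*} [Fintype n] [DecidableEq n]
    (R S : ℝ → Matrix n n ℂ)
    (hRpsd : ∀ ω, (R ω).PosSemidef)
    (hSpsd : ∀ ω, (S ω).PosSemidef)
    (hSsq : ∀ ω, S ω * S ω = R ω)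
    (m : ℕ) (ω : Fin m → ℝ) (t : ℝ) (ht : 0 < t) :
    (Matrix.of (fun p q : Fin m × n =>
      (2 * Real.pi * t : ℝ) *
        Complex.exp (Complex.I * (ω q.1 - ω p.1) * t / 2) *
        (sinc ((ω q.1 - ω p.1) * t / 2) : ℝ) *
        ∑ k : n, S (ω q.1) q.2 k * S (ω p.1) k p.2)).PosSemidef := by
  have hS : ∀ w (i j : n), (starRingEnd ℂ) (S w i j) = S w j i :=
    fun w i j => (hSpsd w).1.apply j i
  set M : Matrix (Fin m × n) (Fin m × n) ℂ := Matrix.of (fun p q : Fin m × n =>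
      (2 * Real.pi * t : ℝ) *
        Complex.exp (Complex.I * (ω q.1 - ω p.1) * t / 2) *
        (sinc ((ω q.1 - ω p.1) * t / 2) : ℝ) *
        ∑ k : n, S (ω q.1) q.2 k * S (ω p.1) k p.2) with hMdef
  -- entry via integral
  have hM : ∀ p q : Fin m × n, M p q =
      (2 * Real.pi : ℝ) *
        (∫ s in (0:ℝ)..t, Complex.exp (Complex.I * ((ω q.1 : ℂ) - (ω p.1 : ℂ)) * s)) *
        (∑ k : n, S (ω q.1) q.2 k * S (ω p.1) k p.2) := by
    intro p q
    have h := integral_exp_I (ω q.1 - ω p.1) t ht.ne'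
    have hcast : ∀ s : ℝ, Complex.I * ((ω q.1 - ω p.1 : ℝ) : ℂ) * s =
        Complex.I * ((ω q.1 : ℂ) - (ω p.1 : ℂ)) * s := by intro s; push_cast; ring
    simp only [hcast] at h
    rw [h]
    simp only [hMdef, Matrix.of_apply]
    push_cast
    ring
  refine Matrix.posSemidef_iff_dotProduct_mulVec.mpr ⟨?_, ?_⟩
  · -- Hermitian
    ext p q
    simp only [Matrix.conjTranspose_apply, hMdef, Matrix.of_apply]
    rw [show (Star.star : ℂ → ℂ) = starRingEnd ℂ from rfl]
    rw [map_mul, map_mul, map_mul, Complex.conj_ofReal, Complex.conj_ofReal]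
    have h1 : (starRingEnd ℂ) (Complex.exp (Complex.I * (ω p.1 - ω q.1) * t / 2)) =
        Complex.exp (Complex.I * (ω q.1 - ω p.1) * t / 2) := by
      rw [← Complex.exp_conj]
      congr 1
      simp only [map_div₀, map_mul, map_sub, Complex.conj_I, Complex.conj_ofReal,
        map_ofNat]
      ring
    have h2 : sinc ((ω p.1 - ω q.1) * t / 2) = sinc ((ω q.1 - ω p.1) * t / 2) := by
      rw [← sinc_neg ((ω q.1 - ω p.1) * t / 2)]
      ring_nf
    have h3 : (starRingEnd ℂ) (∑ k : n, S (ω p.1) p.2 k * S (ω q.1) k q.2) =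
        ∑ k : n, S (ω q.1) q.2 k * S (ω p.1) k p.2 := by
      rw [map_sum]
      refine Finset.sum_congr rfl fun k _ => ?_
      rw [map_mul, hS, hS]
      ring
    rw [h1, h2, h3]
  · -- quadratic form
    intro x
    set g : n → ℝ → ℂ := fun k s => ∑ q : Fin m × n,
      Complex.exp (Complex.I * ω q.1 * s) * S (ω q.1) q.2 k * x q with hg
    have hpoint : ∀ s : ℝ, ((∑ k : n, ‖g k s‖^2 : ℝ) : ℂ) =
        ∑ p : Fin m × n, ∑ q : Fin m × n,
          (starRingEnd ℂ) (x p) * Complex.exp (Complex.I * ((ω q.1 : ℂ) - (ω p.1 : ℂ)) * s) *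
            (∑ k : n, S (ω q.1) q.2 k * S (ω p.1) k p.2) * x q := by
      intro s
      rw [Complex.ofReal_sum]
      calc ∑ k : n, ((‖g k s‖^2 : ℝ) : ℂ)
          = ∑ k : n, (starRingEnd ℂ) (g k s) * g k s := by
            refine Finset.sum_congr rfl fun k _ => ?_
            rw [Complex.sq_norm]
            exact (Complex.mul_conj _).symm.trans (mul_comm _ _)
        _ = ∑ k : n, ∑ p : Fin m × n, ∑ q : Fin m × n,
              (starRingEnd ℂ) (Complex.exp (Complex.I * ω p.1 * s) * S (ω p.1) p.2 k * x p) *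
              (Complex.exp (Complex.I * ω q.1 * s) * S (ω q.1) q.2 k * x q) := by
            refine Finset.sum_congr rfl fun k _ => ?_
            rw [hg]
            rw [map_sum, Finset.sum_mul_sum]
        _ = ∑ p : Fin m × n, ∑ q : Fin m × n, ∑ k : n,
              (starRingEnd ℂ) (Complex.exp (Complex.I * ω p.1 * s) * S (ω p.1) p.2 k * x p) *
              (Complex.exp (Complex.I * ω q.1 * s) * S (ω q.1) q.2 k * x q) := by
            rw [Finset.sum_comm]
            refine Finset.sum_congr rfl fun p _ => ?_
            rw [Finset.sum_comm]
        _ = _ := by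
            refine Finset.sum_congr rfl fun p _ => Finset.sum_congr rfl fun q _ => ?_
            have hexp : (starRingEnd ℂ) (Complex.exp (Complex.I * ω p.1 * s)) *
                Complex.exp (Complex.I * ω q.1 * s) =
                Complex.exp (Complex.I * ((ω q.1 : ℂ) - (ω p.1 : ℂ)) * s) := by
              rw [← Complex.exp_conj, ← Complex.exp_add]
              congr 1
              simp only [map_mul, Complex.conj_I, Complex.conj_ofReal]
              ring
            rw [Finset.mul_sum, Finset.sum_mul]
            refine Finset.sum_congr rfl fun k _ => ?_
            rw [map_mul, map_mul, hS]
            calc (starRingEnd ℂ) (Complex.exp (Complex.I * ω p.1 * s)) * S (ω p.1) k p.2 *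
                  (starRingEnd ℂ) (x p) *
                  (Complex.exp (Complex.I * ω q.1 * s) * S (ω q.1) q.2 k * x q)
                = ((starRingEnd ℂ) (Complex.exp (Complex.I * ω p.1 * s)) *
                    Complex.exp (Complex.I * ω q.1 * s)) *
                  (S (ω p.1) k p.2 * (starRingEnd ℂ) (x p) * S (ω q.1) q.2 k * x q) := by ring
              _ = _ := by rw [hexp]; ring
    have hcont : ∀ p q : Fin m × n, IntervalIntegrable
        (fun s : ℝ => (starRingEnd ℂ) (x p) *
          Complex.exp (Complex.I * ((ω q.1 : ℂ) - (ω p.1 : ℂ)) * s) *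
          (∑ k : n, S (ω q.1) q.2 k * S (ω p.1) k p.2) * x q) MeasureTheory.volume 0 t := by
      intro p q
      apply Continuous.intervalIntegrable
      fun_prop
    have hchain : dotProduct (star x) (M.mulVec x) =
        (((2 * Real.pi) * ∫ s in (0:ℝ)..t, ∑ k : n, ‖g k s‖^2 : ℝ) : ℂ) := by
      calc dotProduct (star x) (M.mulVec x)
          = ∑ p : Fin m × n, ∑ q : Fin m × n, (starRingEnd ℂ) (x p) * (M p q * x q) := by
            simp [dotProduct, Matrix.mulVec, Finset.mul_sum, Complex.star_def]
        _ = ∑ p : Fin m × n, ∑ q : Fin m × n, ((2 * Real.pi : ℝ) : ℂ) *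
              ∫ s in (0:ℝ)..t, (starRingEnd ℂ) (x p) *
                Complex.exp (Complex.I * ((ω q.1 : ℂ) - (ω p.1 : ℂ)) * s) *
                (∑ k : n, S (ω q.1) q.2 k * S (ω p.1) k p.2) * x q := by
            refine Finset.sum_congr rfl fun p _ => Finset.sum_congr rfl fun q _ => ?_
            have hpull : (∫ s in (0:ℝ)..t, (starRingEnd ℂ) (x p) *
                Complex.exp (Complex.I * ((ω q.1 : ℂ) - (ω p.1 : ℂ)) * s) *
                (∑ k : n, S (ω q.1) q.2 k * S (ω p.1) k p.2) * x q) =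
                ((starRingEnd ℂ) (x p) * (∑ k : n, S (ω q.1) q.2 k * S (ω p.1) k p.2) * x q) *
                ∫ s in (0:ℝ)..t, Complex.exp (Complex.I * ((ω q.1 : ℂ) - (ω p.1 : ℂ)) * s) := by
              rw [← intervalIntegral.integral_const_mul]
              apply intervalIntegral.integral_congr
              intro s _
              ring
            rw [hM, hpull]
            ring
        _ = ((2 * Real.pi : ℝ) : ℂ) * ∑ p : Fin m × n, ∑ q : Fin m × n,
              ∫ s in (0:ℝ)..t, (starRingEnd ℂ) (x p) *
                Complex.exp (Complex.I * ((ω q.1 : ℂ) - (ω p.1 : ℂ)) * s) *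
                (∑ k : n, S (ω q.1) q.2 k * S (ω p.1) k p.2) * x q := by
            rw [Finset.mul_sum]
            refine Finset.sum_congr rfl fun p _ => ?_
            rw [Finset.mul_sum]
        _ = ((2 * Real.pi : ℝ) : ℂ) * ∫ s in (0:ℝ)..t, ∑ p : Fin m × n, ∑ q : Fin m × n,
              (starRingEnd ℂ) (x p) *
                Complex.exp (Complex.I * ((ω q.1 : ℂ) - (ω p.1 : ℂ)) * s) *
                (∑ k : n, S (ω q.1) q.2 k * S (ω p.1) k p.2) * x q := by
            congr 1
            have h1 : ∀ p : Fin m × n, (∑ q : Fin m × n, ∫ s in (0:ℝ)..t,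
                (starRingEnd ℂ) (x p) *
                Complex.exp (Complex.I * ((ω q.1 : ℂ) - (ω p.1 : ℂ)) * s) *
                (∑ k : n, S (ω q.1) q.2 k * S (ω p.1) k p.2) * x q) =
                ∫ s in (0:ℝ)..t, ∑ q : Fin m × n, (starRingEnd ℂ) (x p) *
                Complex.exp (Complex.I * ((ω q.1 : ℂ) - (ω p.1 : ℂ)) * s) *
                (∑ k : n, S (ω q.1) q.2 k * S (ω p.1) k p.2) * x q := fun p =>
              (intervalIntegral.integral_finset_sum (fun q _ => hcont p q)).symm
            rw [Finset.sum_congr rfl fun p _ => h1 p]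
            refine (intervalIntegral.integral_finset_sum (fun p _ => ?_)).symm
            apply Continuous.intervalIntegrable
            fun_prop
        _ = ((2 * Real.pi : ℝ) : ℂ) * ∫ s in (0:ℝ)..t,
              ((∑ k : n, ‖g k s‖^2 : ℝ) : ℂ) := by
            congr 1
            apply intervalIntegral.integral_congr
            intro s _
            exact (hpoint s).symm
        _ = (((2 * Real.pi) * ∫ s in (0:ℝ)..t, ∑ k : n, ‖g k s‖^2 : ℝ) : ℂ) := by
            rw [intervalIntegral.integral_ofReal]
            push_cast
            ring
    rw [hchain]
    refine Complex.zero_le_real.mpr ?_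
    refine mul_nonneg (by positivity) ?_
    refine intervalIntegral.integral_nonneg ht.le fun u _ => ?_
    exact Finset.sum_nonneg fun k _ => sq_nonneg _
end

section
/- For real ω ≠ ω′, the normalized coefficient γ(ω,ω′,t)/t = (1/t) e^{i(ω′−ω)t/2} ∫ℝ [t sinc((ω′−Ω)t/2)][t sinc((ω−Ω)t/2)] R(Ω) dΩ tends to 0 as t → ∞, provided R : ℝ → ℂ is integrable and bounded and continuous at ω and ω′. -/
open MeasureTheory Filter Complex

open Set

lemma abs_sinc_le_one (x : ℝ) : |sinc x| ≤ 1 := by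
  unfold sinc
  split_ifs with h
  · simp
  · rw [abs_div]
    exact div_le_one_of_le₀ Real.abs_sin_le_abs (abs_nonneg x)

lemma abs_sinc_le_inv (x : ℝ) (hx : x ≠ 0) : |sinc x| ≤ |x|⁻¹ := by
  unfold sinc
  rw [if_neg hx, abs_div, div_eq_mul_inv]
  have h1 : |Real.sin x| ≤ 1 := abs_le.mpr ⟨Real.neg_one_le_sin x, Real.sin_le_one x⟩
  calc |Real.sin x| * |x|⁻¹ ≤ 1 * |x|⁻¹ :=
        mul_le_mul_of_nonneg_right h1 (by positivity)
    _ = |x|⁻¹ := one_mul _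

/-- key factor bound: `t |sinc (x t / 2)| ≤ √(2 t) / √|x|`. -/
lemma factor_le (t x : ℝ) (ht : 0 < t) (hx : x ≠ 0) :
    t * |sinc (x * t / 2)| ≤ Real.sqrt (2 * t) * (Real.sqrt |x|)⁻¹ := by
  have hb1 : t * |sinc (x * t / 2)| ≤ t := by
    calc t * |sinc (x * t / 2)| ≤ t * 1 :=
          mul_le_mul_of_nonneg_left (abs_sinc_le_one _) ht.le
      _ = t := mul_one t
  have hxt : x * t / 2 ≠ 0 := by
    have := ht.ne'
    field_simp
    exact div_ne_zero (mul_ne_zero hx this) two_ne_zero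
  have hb2 : t * |sinc (x * t / 2)| ≤ 2 / |x| := by
    have := abs_sinc_le_inv (x * t / 2) hxt
    have h2 : |x * t / 2| = |x| * t / 2 := by
      rw [abs_div, abs_mul, abs_of_pos ht]; norm_num
    rw [h2] at this
    calc t * |sinc (x * t / 2)| ≤ t * (|x| * t / 2)⁻¹ :=
          mul_le_mul_of_nonneg_left this ht.le
      _ = 2 / |x| := by
          have hxpos : 0 < |x| := abs_pos.mpr hx
          field_simp
  -- min ≤ sqrt of product
  have hnn : 0 ≤ t * |sinc (x * t / 2)| := by positivity
  have hxpos : 0 < |x| := abs_pos.mpr hx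
  have hsq : (t * |sinc (x * t / 2)|) ^ 2 ≤ 2 * t / |x| := by
    have := mul_le_mul hb1 hb2 hnn ht.le
    calc (t * |sinc (x * t / 2)|) ^ 2 = (t * |sinc (x * t / 2)|) * (t * |sinc (x * t / 2)|) := sq (t * |sinc (x * t / 2)|) ▸ by ring
      _ ≤ t * (2 / |x|) := by
          have h' := mul_le_mul hb2 hb1 hnn (by positivity : (0:ℝ) ≤ 2 / |x|)
          linarith [mul_le_mul hb2 hb1 hnn (by positivity : (0:ℝ) ≤ 2 / |x|)]
      _ = 2 * t / |x| := by ring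
  have hle : t * |sinc (x * t / 2)| ≤ Real.sqrt (2 * t / |x|) :=
    (Real.le_sqrt hnn (by positivity)).mpr hsq
  calc t * |sinc (x * t / 2)| ≤ Real.sqrt (2 * t / |x|) := hle
    _ = Real.sqrt (2 * t) * (Real.sqrt |x|)⁻¹ := by
        rw [Real.sqrt_div (by positivity : (0:ℝ) ≤ 2 * t), div_eq_mul_inv]

lemma intervalIntegrable_inv_sqrt_abs :
    IntervalIntegrable (fun x : ℝ => (Real.sqrt |x|)⁻¹) volume (-1) 1 := by
  have h0 : IntervalIntegrable (fun x : ℝ => x ^ (-(1:ℝ)/2)) volume 0 1 :=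
    intervalIntegral.intervalIntegrable_rpow' (by norm_num)
  have h1 : IntervalIntegrable (fun x : ℝ => (Real.sqrt |x|)⁻¹) volume 0 1 := by
    rw [intervalIntegrable_iff] at h0 ⊢
    refine h0.congr_fun ?_ measurableSet_uIoc
    intro x hx
    rw [Set.uIoc_of_le (by norm_num : (0:ℝ) ≤ 1)] at hx
    have hx0 : 0 < x := hx.1
    simp only []
    rw [abs_of_pos hx0, Real.sqrt_eq_rpow, ← Real.rpow_neg hx0.le]
    norm_num
  have h2 : IntervalIntegrable (fun x : ℝ => (Real.sqrt |x|)⁻¹) volume (-1) 0 := by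
    have := (IntervalIntegrable.iff_comp_neg (by simp)).mp h1
    simp only [abs_neg, neg_zero, neg_neg] at this
    exact this.symm
  exact h2.trans h1

lemma integrable_inv_sqrt_mul (a : ℝ) (R : ℝ → ℂ) (hR : Integrable R)
    (C : ℝ) (hbd : ∀ x, ‖R x‖ ≤ C) :
    Integrable (fun Ω : ℝ => (Real.sqrt |Ω - a|)⁻¹ * ‖R Ω‖) := by
  have hmeas : AEStronglyMeasurable (fun Ω : ℝ => (Real.sqrt |Ω - a|)⁻¹ * ‖R Ω‖) volume := by
    apply AEStronglyMeasurable.mul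
    · exact ((Real.continuous_sqrt.comp ((continuous_id.sub continuous_const).abs)).measurable.inv).aestronglyMeasurable
    · exact hR.norm.aestronglyMeasurable
  have hshift : IntervalIntegrable (fun x : ℝ => (Real.sqrt |x - a|)⁻¹) volume (-1 + a) (1 + a) :=
    intervalIntegrable_inv_sqrt_abs.comp_sub_right a
  have hIoo : IntegrableOn (fun x : ℝ => (Real.sqrt |x - a|)⁻¹) (Ioo (a - 1) (a + 1)) volume := by
    rw [intervalIntegrable_iff_integrableOn_Ioo_of_le (by linarith)] at hshift
    have : Ioo (a - 1) (a + 1) = Ioo (-1 + a) (1 + a) := by ring_nf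
    rw [this]; exact hshift
  have int1 : IntegrableOn (fun Ω : ℝ => (Real.sqrt |Ω - a|)⁻¹ * ‖R Ω‖)
      (Ioo (a - 1) (a + 1)) volume := by
    refine Integrable.mono' (hIoo.const_mul (max C 0)) hmeas.restrict ?_
    refine ae_of_all _ fun Ω => ?_
    rw [Real.norm_eq_abs, _root_.abs_of_nonneg (by positivity)]
    calc (Real.sqrt |Ω - a|)⁻¹ * ‖R Ω‖ ≤ (Real.sqrt |Ω - a|)⁻¹ * max C 0 :=
          mul_le_mul_of_nonneg_left ((hbd Ω).trans (le_max_left _ _)) (by positivity)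
      _ = max C 0 * (Real.sqrt |Ω - a|)⁻¹ := mul_comm _ _
  have int2 : IntegrableOn (fun Ω : ℝ => (Real.sqrt |Ω - a|)⁻¹ * ‖R Ω‖)
      (Ioo (a - 1) (a + 1))ᶜ volume := by
    refine Integrable.mono' hR.norm.integrableOn hmeas.restrict ?_
    refine (ae_restrict_iff' measurableSet_Ioo.compl).mpr (ae_of_all _ fun Ω hΩ => ?_)
    rw [Real.norm_eq_abs, _root_.abs_of_nonneg (by positivity)]
    have h1 : 1 ≤ |Ω - a| := by
      simp only [mem_compl_iff, mem_Ioo, not_and_or, not_lt] at hΩ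
      rcases hΩ with h | h
      · rw [abs_sub_comm, _root_.abs_of_nonneg (by linarith : (0:ℝ) ≤ a - Ω)]; linarith
      · rw [_root_.abs_of_nonneg (by linarith : (0:ℝ) ≤ Ω - a)]; linarith
    have : (Real.sqrt |Ω - a|)⁻¹ ≤ 1 := by
      rw [inv_le_one_iff₀]
      right
      rw [show (1:ℝ) = Real.sqrt 1 from (Real.sqrt_one).symm]
      exact Real.sqrt_le_sqrt h1
    calc (Real.sqrt |Ω - a|)⁻¹ * ‖R Ω‖ ≤ 1 * ‖R Ω‖ :=
          mul_le_mul_of_nonneg_right this (norm_nonneg _)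
      _ = ‖R Ω‖ := one_mul _
  have := integrableOn_union.mpr ⟨int1, int2⟩
  rwa [Set.union_compl_self, integrableOn_univ] at this

lemma factor_le_two_div (t x : ℝ) (ht : 0 < t) (hx : x ≠ 0) :
    t * |sinc (x * t / 2)| ≤ 2 / |x| := by
  have hxt : x * t / 2 ≠ 0 := by
    have := ht.ne'
    field_simp
    exact div_ne_zero (mul_ne_zero hx this) two_ne_zero
  have h := abs_sinc_le_inv (x * t / 2) hxt
  have h2 : |x * t / 2| = |x| * t / 2 := by
    rw [abs_div, abs_mul, abs_of_pos ht]; norm_num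
  rw [h2] at h
  have hxpos : 0 < |x| := abs_pos.mpr hx
  calc t * |sinc (x * t / 2)| ≤ t * (|x| * t / 2)⁻¹ :=
        mul_le_mul_of_nonneg_left h ht.le
    _ = 2 / |x| := by field_simp

lemma pointwise_bound (ω ω' : ℝ) (hne : ω ≠ ω') (R : ℝ → ℂ) {t : ℝ} (ht : 0 < t)
    {Ω : ℝ} (h1 : Ω ≠ ω) (h2 : Ω ≠ ω') :
    ‖((t:ℂ) * (sinc ((ω' - Ω) * t / 2) : ℝ)) * ((t:ℂ) * (sinc ((ω - Ω) * t / 2) : ℝ)) * R Ω‖ ≤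
      4 / |ω - ω'| * Real.sqrt (2 * t) *
        (((Real.sqrt |Ω - ω|)⁻¹ + (Real.sqrt |Ω - ω'|)⁻¹) * ‖R Ω‖) := by
  have hu : ω - Ω ≠ 0 := sub_ne_zero.mpr (Ne.symm h1)
  have hv : ω' - Ω ≠ 0 := sub_ne_zero.mpr (Ne.symm h2)
  have hd : 0 < |ω - ω'| := abs_pos.mpr (sub_ne_zero.mpr hne)
  set d := |ω - ω'| with hd_def
  set A := t * |sinc ((ω' - Ω) * t / 2)| with hA_def
  set B := t * |sinc ((ω - Ω) * t / 2)| with hB_def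
  set s1 := (Real.sqrt |Ω - ω|)⁻¹ with hs1_def
  set s2 := (Real.sqrt |Ω - ω'|)⁻¹ with hs2_def
  have hA0 : 0 ≤ A := by positivity
  have hB0 : 0 ≤ B := by positivity
  have hs10 : 0 ≤ s1 := by positivity
  have hs20 : 0 ≤ s2 := by positivity
  have hr0 : 0 ≤ ‖R Ω‖ := norm_nonneg _
  have hnorm : ‖((t:ℂ) * (sinc ((ω' - Ω) * t / 2) : ℝ)) *
      ((t:ℂ) * (sinc ((ω - Ω) * t / 2) : ℝ)) * R Ω‖ = A * B * ‖R Ω‖ := by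
    simp only [norm_mul, Complex.norm_real, Real.norm_eq_abs,
      Complex.norm_natCast]
    rw [abs_of_pos ht]
  rw [hnorm]
  have htri : d ≤ |ω - Ω| + |ω' - Ω| := by
    have := abs_sub_le ω Ω ω'
    rw [hd_def]
    calc |ω - ω'| ≤ |ω - Ω| + |Ω - ω'| := abs_sub_le ω Ω ω'
      _ = |ω - Ω| + |ω' - Ω| := by rw [abs_sub_comm Ω ω']
  have key : ∀ r : ℝ, 0 ≤ r →
      (A ≤ Real.sqrt (2 * t) * s2 → B ≤ 4 / d → A * B * r ≤ 4 / d * Real.sqrt (2 * t) * ((s1 + s2) * r)) := by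
    intro r hr hA hB
    calc A * B * r ≤ (Real.sqrt (2 * t) * s2) * (4 / d) * r := by
          refine mul_le_mul (mul_le_mul hA hB hB0 (by positivity)) le_rfl hr (by positivity)
      _ = 4 / d * Real.sqrt (2 * t) * (s2 * r) := by ring
      _ ≤ 4 / d * Real.sqrt (2 * t) * ((s1 + s2) * r) := by
          refine mul_le_mul_of_nonneg_left ?_ (by positivity)
          exact mul_le_mul_of_nonneg_right (by linarith) hr
  have key' : ∀ r : ℝ, 0 ≤ r →
      (B ≤ Real.sqrt (2 * t) * s1 → A ≤ 4 / d → A * B * r ≤ 4 / d * Real.sqrt (2 * t) * ((s1 + s2) * r)) := by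
    intro r hr hB hA
    calc A * B * r ≤ (4 / d) * (Real.sqrt (2 * t) * s1) * r := by
          refine mul_le_mul (mul_le_mul hA hB hB0 (by positivity)) le_rfl hr (by positivity)
      _ = 4 / d * Real.sqrt (2 * t) * (s1 * r) := by ring
      _ ≤ 4 / d * Real.sqrt (2 * t) * ((s1 + s2) * r) := by
          refine mul_le_mul_of_nonneg_left ?_ (by positivity)
          exact mul_le_mul_of_nonneg_right (by linarith) hr
  rcases le_or_gt (d / 2) |ω - Ω| with hcase | hcase
  · -- B ≤ 4/d, A ≤ √(2t) s2
    have hB : B ≤ 4 / d := by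
      calc B ≤ 2 / |ω - Ω| := factor_le_two_div t (ω - Ω) ht hu
        _ ≤ 2 / (d / 2) := by
            apply div_le_div_of_nonneg_left (by norm_num) (by linarith) hcase
        _ = 4 / d := by rw [div_div_eq_mul_div]; norm_num
    have hA : A ≤ Real.sqrt (2 * t) * s2 := by
      have := factor_le t (ω' - Ω) ht hv
      rwa [abs_sub_comm ω' Ω] at this
    exact key _ hr0 hA hB
  · have hcase' : d / 2 ≤ |ω' - Ω| := by linarith
    have hA : A ≤ 4 / d := by
      calc A ≤ 2 / |ω' - Ω| := factor_le_two_div t (ω' - Ω) ht hv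
        _ ≤ 2 / (d / 2) := by
            apply div_le_div_of_nonneg_left (by norm_num) (by linarith) hcase'
        _ = 4 / d := by rw [div_div_eq_mul_div]; norm_num
    have hB : B ≤ Real.sqrt (2 * t) * s1 := by
      have := factor_le t (ω - Ω) ht hu
      rwa [abs_sub_comm ω Ω] at this
    exact key' _ hr0 hB hA

theorem offdiagonal_rate_tendsto_zero (ω ω' : ℝ) (hne : ω ≠ ω')
    (R : ℝ → ℂ) (hR : Integrable R) (hbd : ∃ C : ℝ, ∀ x, ‖R x‖ ≤ C)
    (hcω : ContinuousAt R ω) (hcω' : ContinuousAt R ω') :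
    Tendsto (fun t : ℝ =>
        (1 / (t : ℂ)) * Complex.exp (Complex.I * (ω' - ω) * t / 2) *
          ∫ Ω : ℝ, ((t : ℂ) * (sinc ((ω' - Ω) * t / 2) : ℝ)) *
            ((t : ℂ) * (sinc ((ω - Ω) * t / 2) : ℝ)) * R Ω)
      atTop (nhds 0) := by
  obtain ⟨C, hC⟩ := hbd
  set d := |ω - ω'| with hd_def
  have hd : 0 < d := abs_pos.mpr (sub_ne_zero.mpr hne)
  set G : ℝ → ℝ := fun Ω => ((Real.sqrt |Ω - ω|)⁻¹ + (Real.sqrt |Ω - ω'|)⁻¹) * ‖R Ω‖ with hG_def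
  have hG : Integrable G := by
    have := (integrable_inv_sqrt_mul ω R hR C hC).add (integrable_inv_sqrt_mul ω' R hR C hC)
    exact this.congr (ae_of_all _ fun Ω => (add_mul _ _ _).symm)
  set M : ℝ := ∫ Ω : ℝ, G Ω with hM_def
  have hM0 : 0 ≤ M := integral_nonneg fun Ω => by positivity
  -- a.e. avoidance of the two singular points
  have hae_ne : ∀ᵐ Ω : ℝ, Ω ≠ ω ∧ Ω ≠ ω' := by
    have h1 : ∀ᵐ Ω : ℝ, Ω ≠ ω := by
      have : (volume ({ω} : Set ℝ)) = 0 := measure_singleton ω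
      filter_upwards [compl_mem_ae_iff.mpr this] with Ω hΩ using hΩ
    have h2 : ∀ᵐ Ω : ℝ, Ω ≠ ω' := by
      have : (volume ({ω'} : Set ℝ)) = 0 := measure_singleton ω'
      filter_upwards [compl_mem_ae_iff.mpr this] with Ω hΩ using hΩ
    exact h1.and h2
  rw [tendsto_zero_iff_norm_tendsto_zero]
  refine squeeze_zero' (g := fun t => 4 / d * Real.sqrt 2 * M * (Real.sqrt t)⁻¹)
    (Eventually.of_forall fun t => norm_nonneg _) ?_ ?_
  · -- eventual bound by (4/d * √2 * M) / √t
    filter_upwards [eventually_ge_atTop (1 : ℝ)] with t ht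
    have ht0 : 0 < t := lt_of_lt_of_le one_pos ht
    have hbound : ‖∫ Ω : ℝ, ((t : ℂ) * (sinc ((ω' - Ω) * t / 2) : ℝ)) *
        ((t : ℂ) * (sinc ((ω - Ω) * t / 2) : ℝ)) * R Ω‖ ≤
        ∫ Ω : ℝ, 4 / d * Real.sqrt (2 * t) * G Ω := by
      refine norm_integral_le_of_norm_le (hG.const_mul _) ?_
      filter_upwards [hae_ne] with Ω hΩ
      exact pointwise_bound ω ω' hne R ht0 hΩ.1 hΩ.2
    rw [MeasureTheory.integral_const_mul] at hbound
    have hexp : ‖Complex.exp (Complex.I * ((ω' : ℂ) - (ω : ℂ)) * (t : ℂ) / 2)‖ = 1 := by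
      have harg : Complex.I * ((ω' : ℂ) - (ω : ℂ)) * (t : ℂ) / 2 =
          (((ω' - ω) * t / 2 : ℝ) : ℂ) * Complex.I := by push_cast; ring
      rw [harg, Complex.norm_exp_ofReal_mul_I]
    rw [norm_mul, norm_mul, hexp, mul_one]
    have h1t : ‖1 / (t : ℂ)‖ = t⁻¹ := by
      rw [norm_div, norm_one, Complex.norm_real, Real.norm_eq_abs,
        abs_of_pos ht0, one_div]
    rw [h1t]
    have hsq : Real.sqrt t * Real.sqrt t = t := Real.mul_self_sqrt ht0.le
    have hsqpos : 0 < Real.sqrt t := Real.sqrt_pos.mpr ht0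
    calc t⁻¹ * ‖∫ Ω : ℝ, ((t : ℂ) * (sinc ((ω' - Ω) * t / 2) : ℝ)) *
          ((t : ℂ) * (sinc ((ω - Ω) * t / 2) : ℝ)) * R Ω‖
        ≤ t⁻¹ * (4 / d * Real.sqrt (2 * t) * M) :=
          mul_le_mul_of_nonneg_left hbound (by positivity)
      _ = 4 / d * Real.sqrt 2 * M * (Real.sqrt t)⁻¹ := by
          rw [Real.sqrt_mul (by norm_num : (0:ℝ) ≤ 2) t]
          field_simp
          linear_combination M * hsq
  · have hs : Tendsto Real.sqrt atTop atTop := by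
      refine Tendsto.congr' ?_ (tendsto_rpow_atTop (by norm_num : (0:ℝ) < 1/2))
      filter_upwards [eventually_ge_atTop (0:ℝ)] with x hx
      rw [Real.sqrt_eq_rpow]
    have := (hs.inv_tendsto_atTop).const_mul (4 / d * Real.sqrt 2 * M)
    simpa using this
end
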